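/- arXiv:1806.06438 — 3 statements merged into one kernel-verified Lean document; each statement's English description precedes it below -/
import Mathlib

section
/- Let f : ℝ^p → ℝ^n be differentiable with Jacobian mapping J(θ) ∈ ℝ^{n×p} (the matrix of the Fréchet derivative of f at θ), let y ∈ ℝ^n, and let θ₀ ∈ ℝ^p. Let ‖·‖_* be a norm on ℝ^p dominated by the Euclidean norm (‖θ‖_* ≤ ‖θ‖₂ for all θ). Suppose there exist α, β > 0 with: (1) σ_min(J(θ₀)) ≥ 2α; (2) for all θ with ‖θ − θ₀‖_* ≤ R := 5‖y − f(θ₀)‖₂/α, the spectral norm bound ‖J(θ) − J(θ₀)‖ ≤ α/3 holds; (3) ‖J(θ)‖ ≤ β for all θ ∈ ℝ^p. Then for any constant step size 0 < η ≤ 1/β², the gradient iterations θ_{τ+1} = θ_τ − η·J(θ_τ)ᵀ(f(θ_τ) − y) satisfy, for every τ ≥ 0: ‖y − f(θ_τ)‖₂ ≤ (1 − ηα²/4)^τ ‖y − f(θ₀)‖₂ and (α/5)‖θ_τ − θ₀‖_* + ‖y − f(θ_τ)‖₂ ≤ ‖y − f(θ₀)‖₂. -/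
open MeasureTheory

noncomputable section

open scoped RealInnerProductSpace

lemma aux_genCS {E : Type*} [NormedAddCommGroup E] [InnerProductSpace ℝ E]
    (T : E →L[ℝ] E) (hsym : ∀ x y : E, ⟪T x, y⟫ = ⟪x, T y⟫)
    (hpos : ∀ x : E, 0 ≤ ⟪T x, x⟫) (x y : E) :
    ⟪T x, y⟫ ^ 2 ≤ ⟪T x, x⟫ * ⟪T y, y⟫ := by
  have key : ∀ t : ℝ, 0 ≤ ⟪T y, y⟫ * (t * t) + (2 * ⟪T x, y⟫) * t + ⟪T x, x⟫ := by
    intro t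
    have h := hpos (x + t • y)
    have h1 : ⟪T y, x⟫ = ⟪T x, y⟫ := by rw [hsym y x, real_inner_comm]
    have hexp : ⟪T (x + t • y), x + t • y⟫
        = ⟪T y, y⟫ * (t * t) + (2 * ⟪T x, y⟫) * t + ⟪T x, x⟫ := by
      simp only [map_add, _root_.map_smul, inner_add_left, inner_add_right,
        real_inner_smul_left, real_inner_smul_right, h1]
      ring
    linarith [hexp ▸ h]
  have hd := discrim_le_zero key
  rw [discrim] at hd
  nlinarith [hd]

lemma aux_opbound {E : Type*} [NormedAddCommGroup E] [InnerProductSpace ℝ E]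
    (T : E →L[ℝ] E) (c : ℝ)
    (hsym : ∀ x y : E, ⟪T x, y⟫ = ⟪x, T y⟫)
    (hpos : ∀ x : E, 0 ≤ ⟪T x, x⟫)
    (hle : ∀ x : E, ⟪T x, x⟫ ≤ c * ‖x‖ ^ 2)
    (e : E) : ‖T e‖ ≤ c * ‖e‖ := by
  rcases eq_or_ne e 0 with rfl | he
  · simp
  have hepos : (0:ℝ) < ‖e‖ := norm_pos_iff.mpr he
  have hc : 0 ≤ c := by nlinarith [hpos e, hle e, mul_pos hepos hepos]
  rcases eq_or_ne (T e) 0 with h0 | h0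
  · rw [h0]; simpa using by positivity
  have hTe : (0:ℝ) < ‖T e‖ := norm_pos_iff.mpr h0
  have hCS := aux_genCS T hsym hpos e (T e)
  have h1 : ⟪T e, T e⟫ = ‖T e‖ ^ 2 := real_inner_self_eq_norm_sq _
  have h2 : ⟪T (T e), T e⟫ ≤ c * ‖T e‖ ^ 2 := hle (T e)
  have h3 : ⟪T e, e⟫ ≤ c * ‖e‖ ^ 2 := hle e
  have h4 : 0 ≤ ⟪T e, e⟫ := hpos e
  have h5 : (‖T e‖ ^ 2) ^ 2 ≤ ⟪T e, e⟫ * (c * ‖T e‖ ^ 2) := by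
    calc (‖T e‖ ^ 2) ^ 2 = ⟪T e, T e⟫ ^ 2 := by rw [h1]
      _ ≤ ⟪T e, e⟫ * ⟪T (T e), T e⟫ := hCS
      _ ≤ ⟪T e, e⟫ * (c * ‖T e‖ ^ 2) := mul_le_mul_of_nonneg_left h2 h4
  have h6 : ‖T e‖ ^ 2 ≤ c * ⟪T e, e⟫ := by
    have hsq : (0:ℝ) < ‖T e‖ ^ 2 := by positivity
    nlinarith [h5]
  have h7 : ‖T e‖ ^ 2 ≤ (c * ‖e‖) ^ 2 := by nlinarith [h6, h3, hc]
  nlinarith [h7, norm_nonneg (T e), mul_nonneg hc hepos.le]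

lemma aux_key (α η r s w x : ℝ) (hα : 0 < α) (hη0 : 0 < η) (hr : 0 < r) (hs0 : 0 ≤ s)
    (hx : x ≤ w + 2 * α / 3 * (η * s)) (hw0 : 0 ≤ w)
    (hwspec : w ≤ (1 - 25 * η * α ^ 2 / 9) * r)
    (hw2 : w ^ 2 ≤ r ^ 2 - η * s ^ 2) :
    x + α / 5 * (η * s) ≤ r := by
  rcases le_or_gt s (2 * α * r) with hc | hc
  · nlinarith [mul_le_mul_of_nonneg_left hc (mul_nonneg hη0.le hα.le),
      mul_nonneg (mul_nonneg hη0.le hα.le) hs0,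
      mul_nonneg (mul_nonneg (mul_nonneg hη0.le hα.le) hα.le) hr.le]
  · have hw1 : 2 * r * w ≤ 2 * r ^ 2 - η * s ^ 2 := by nlinarith [sq_nonneg (r - w)]
    have hA : 2 * r * (x + α / 5 * (η * s)) ≤ 2 * r * r := by
      nlinarith [mul_le_mul_of_nonneg_left hc.le (mul_nonneg hη0.le hs0),
        mul_le_mul_of_nonneg_left hx (by linarith : (0:ℝ) ≤ 2 * r),
        mul_nonneg hη0.le (mul_nonneg hs0 hs0)]
    nlinarith [hA, hr]


open ContinuousLinearMap in
set_option maxHeartbeats 4000000 in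
lemma aux_step {E F : Type*} [NormedAddCommGroup E] [InnerProductSpace ℝ E] [CompleteSpace E]
    [NormedAddCommGroup F] [InnerProductSpace ℝ F] [CompleteSpace F]
    (f : E → F) (hf : Differentiable ℝ f) (y : F) (θ₀ : E)
    (Nst : Seminorm ℝ E) (hNdom : ∀ x, Nst x ≤ ‖x‖)
    (α β η : ℝ) (hα : 0 < α) (hβ : 0 < β) (hη0 : 0 < η)
    (hηβ : η * β ^ 2 ≤ 1) (hβα : 2 * α ≤ β)
    (hlow0 : ∀ v : F, 2 * α * ‖v‖ ≤ ‖adjoint (fderiv ℝ f θ₀) v‖)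
    (h2 : ∀ θ, Nst (θ - θ₀) ≤ 5 * ‖y - f θ₀‖ / α → ‖fderiv ℝ f θ - fderiv ℝ f θ₀‖ ≤ α / 3)
    (h3 : ∀ θ, ‖fderiv ℝ f θ‖ ≤ β)
    (θ θ' : E)
    (hθ' : θ' = θ - η • adjoint (fderiv ℝ f θ) (f θ - y))
    (hb : α / 5 * Nst (θ - θ₀) + ‖y - f θ‖ ≤ ‖y - f θ₀‖) :
    α / 5 * Nst (θ' - θ₀) + ‖y - f θ'‖ ≤ ‖y - f θ₀‖ ∧
    ‖y - f θ'‖ ≤ (1 - η * α ^ 2 / 4) * ‖y - f θ‖ := by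
  set J₀ := fderiv ℝ f θ₀ with hJ₀def
  set r₀ := ‖y - f θ₀‖ with hr₀def
  set J := fderiv ℝ f θ with hJdef
  set e : F := f θ - y with hedef
  set g : E := adjoint J e with hgdef
  set r : ℝ := ‖e‖ with hrdef
  set s : ℝ := ‖g‖ with hsdef
  have hyfθ : ‖y - f θ‖ = r := by rw [hrdef, hedef, norm_sub_rev]
  rw [hyfθ] at hb ⊢
  have hr0 : 0 ≤ r := norm_nonneg _
  rcases eq_or_lt_of_le hr0 with hr | hr
  · have he0 : e = 0 := by rw [← norm_eq_zero, ← hrdef, ← hr]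
    have hg0 : g = 0 := by rw [hgdef, he0, map_zero]
    have hθeq : θ' = θ := by rw [hθ', hg0, smul_zero, sub_zero]
    rw [hθeq, hyfθ]
    constructor
    · exact hb
    · rw [← hr, mul_zero]
  -- main case
  have hsβ : s ≤ β * r := by
    have h2b : s ≤ ‖adjoint J‖ * r := ContinuousLinearMap.le_opNorm _ _
    have h2c : ‖adjoint J‖ = ‖J‖ := LinearIsometryEquiv.norm_map adjoint J
    rw [h2c] at h2b
    exact le_trans h2b (mul_le_mul_of_nonneg_right (h3 θ) hr0)
  have hηs : α * (η * s) ≤ r / 2 := by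
    have e1 : η * s ≤ η * (β * r) := mul_le_mul_of_nonneg_left hsβ hη0.le
    have e2 : α * (η * (β * r)) ≤ r / 2 := by
      have p1 : (0:ℝ) ≤ η * β * r := by positivity
      have p2 : α * (η * β * r) ≤ (β / 2) * (η * β * r) :=
        mul_le_mul_of_nonneg_right (by linarith) p1
      have p3 : (η * β ^ 2) * r ≤ 1 * r := mul_le_mul_of_nonneg_right hηβ hr0
      nlinarith only [p2, p3]
    have e3 : α * (η * s) ≤ α * (η * (β * r)) := mul_le_mul_of_nonneg_left e1 hα.le
    linarith only [e3, e2]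
  have hNb : α * Nst (θ - θ₀) ≤ 5 * (r₀ - r) := by linarith
  have hball : ∀ ξ ∈ segment ℝ θ θ', Nst (ξ - θ₀) ≤ 5 * r₀ / α := by
    intro ξ hξ
    rw [segment_eq_image'] at hξ
    obtain ⟨t, ⟨ht0, ht1⟩, rfl⟩ := hξ
    have hsplit : θ + t • (θ' - θ) - θ₀ = (θ - θ₀) + t • (θ' - θ) := by abel
    rw [hsplit]
    have hΔeq : θ' - θ = -(η • g) := by rw [hθ']; abel
    have hNt : Nst (t • (θ' - θ)) ≤ η * s := by
      rw [map_smul_eq_mul]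
      have hd : Nst (θ' - θ) ≤ η * s := by
        refine le_trans (hNdom _) ?_
        rw [hΔeq, norm_neg, norm_smul, Real.norm_eq_abs, abs_of_pos hη0]
      have habs : ‖t‖ ≤ 1 := by rw [Real.norm_eq_abs, abs_of_nonneg ht0]; exact ht1
      calc ‖t‖ * Nst (θ' - θ) ≤ 1 * (η * s) :=
            mul_le_mul habs hd (apply_nonneg _ _) zero_le_one
        _ = η * s := one_mul _
    rw [le_div_iff₀ hα]
    have hadd := map_add_le_add Nst (θ - θ₀) (t • (θ' - θ))
    have hsum : Nst ((θ - θ₀) + t • (θ' - θ)) ≤ Nst (θ - θ₀) + η * s :=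
      le_trans hadd (by linarith only [hNt])
    have hmul : Nst ((θ - θ₀) + t • (θ' - θ)) * α
        ≤ (Nst (θ - θ₀) + η * s) * α := mul_le_mul_of_nonneg_right hsum hα.le
    nlinarith only [hmul, hNb, hηs, hr.le]
  have hJseg : ∀ ξ ∈ segment ℝ θ θ', ‖fderiv ℝ f ξ - J₀‖ ≤ α / 3 :=
    fun ξ hξ => h2 ξ (hball ξ hξ)
  have hJθ : ‖J - J₀‖ ≤ α / 3 := hJseg θ (left_mem_segment ℝ _ _)
  have hlow : ∀ v : F, 5 * α / 3 * ‖v‖ ≤ ‖adjoint J v‖ := by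
    intro v
    have h1v := hlow0 v
    have hdiffv : ‖adjoint J₀ v - adjoint J v‖ ≤ α / 3 * ‖v‖ := by
      have heq : adjoint J₀ v - adjoint J v = (adjoint (J₀ - J)) v := by
        rw [map_sub, ContinuousLinearMap.sub_apply]
      rw [heq]
      have hb1 : ‖(adjoint (J₀ - J)) v‖ ≤ ‖adjoint (J₀ - J)‖ * ‖v‖ :=
        ContinuousLinearMap.le_opNorm _ _
      have hb2 : ‖adjoint (J₀ - J)‖ = ‖J₀ - J‖ := LinearIsometryEquiv.norm_map adjoint _
      rw [hb2] at hb1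
      refine le_trans hb1 (mul_le_mul_of_nonneg_right ?_ (norm_nonneg v))
      rw [norm_sub_rev]
      exact hJθ
    have htri : ‖adjoint J₀ v‖ - ‖adjoint J v‖ ≤ ‖adjoint J₀ v - adjoint J v‖ :=
      norm_sub_norm_le _ _
    linarith only [h1v, hdiffv, htri]
  have hslow : 5 * α / 3 * r ≤ s := hlow e
  have hmvt : ‖f θ' - f θ - J (θ' - θ)‖ ≤ 2 * α / 3 * ‖θ' - θ‖ := by
    refine Convex.norm_image_sub_le_of_norm_fderiv_le' (fun ξ _ => (hf ξ)) ?_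
      (convex_segment _ _) (left_mem_segment ℝ _ _) (right_mem_segment ℝ _ _)
    intro ξ hξ
    have e1 : fderiv ℝ f ξ - J = (fderiv ℝ f ξ - J₀) - (J - J₀) := by abel
    rw [e1]
    refine le_trans (norm_sub_le _ _) ?_
    have hx := hJseg ξ hξ
    linarith only [hx, hJθ]
  have hΔeq : θ' - θ = -(η • g) := by rw [hθ']; abel
  have hnΔ : ‖θ' - θ‖ = η * s := by
    rw [hΔeq, norm_neg, norm_smul, Real.norm_eq_abs, abs_of_pos hη0]
  set w : F := e - η • (J g) with hwdef
  have hJΔ : J (θ' - θ) = -(η • (J g)) := by rw [hΔeq, map_neg, _root_.map_smul]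
  set e' : F := f θ' - y with he'def
  have hyfθ' : ‖y - f θ'‖ = ‖e'‖ := by rw [he'def, norm_sub_rev]
  have he'split : e' = w + (f θ' - f θ - J (θ' - θ)) := by
    rw [hJΔ, hwdef, hedef, he'def]
    abel
  have hr' : ‖e'‖ ≤ ‖w‖ + 2 * α / 3 * (η * s) := by
    rw [he'split]
    refine le_trans (norm_add_le _ _) ?_
    rw [hnΔ] at hmvt
    linarith only [hmvt]
  have hipJg : ∀ u v : F, ⟪J (adjoint J u), v⟫ = ⟪adjoint J u, adjoint J v⟫ := by
    intro u v
    rw [real_inner_comm, ← ContinuousLinearMap.adjoint_inner_left J, real_inner_comm]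
  have hJgnorm : ‖J g‖ ≤ β * s := by
    refine le_trans (ContinuousLinearMap.le_opNorm _ _) ?_
    exact mul_le_mul_of_nonneg_right (h3 θ) (norm_nonneg g)
  have hw2 : ‖w‖ ^ 2 ≤ r ^ 2 - η * s ^ 2 := by
    have hin : ⟪e, J g⟫ = s ^ 2 := by
      rw [hgdef, real_inner_comm, hipJg e e, ← hgdef, real_inner_self_eq_norm_sq, hsdef]
    have hexp : ‖w‖ ^ 2 = r ^ 2 - 2 * (η * s ^ 2) + η ^ 2 * ‖J g‖ ^ 2 := by
      rw [hwdef, norm_sub_sq_real, real_inner_smul_right, norm_smul,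
        Real.norm_eq_abs, abs_of_pos hη0, hin]
      ring
    have hJg2 : η ^ 2 * ‖J g‖ ^ 2 ≤ η * s ^ 2 := by
      have q1 : ‖J g‖ ^ 2 ≤ (β * s) ^ 2 := pow_le_pow_left₀ (norm_nonneg _) hJgnorm 2
      have p1 : η ^ 2 * ‖J g‖ ^ 2 ≤ η ^ 2 * (β * s) ^ 2 :=
        mul_le_mul_of_nonneg_left q1 (sq_nonneg η)
      have p2 : (η * β ^ 2) * (η * s ^ 2) ≤ 1 * (η * s ^ 2) :=
        mul_le_mul_of_nonneg_right hηβ (by positivity)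
      nlinarith only [p1, p2]
    linarith only [hexp, hJg2]
  set T : F →L[ℝ] F := ContinuousLinearMap.id ℝ F - η • (J ∘L adjoint J) with hTdef
  have hTapp : ∀ v, T v = v - η • (J (adjoint J v)) := by
    intro v
    rw [hTdef]
    simp [ContinuousLinearMap.sub_apply, ContinuousLinearMap.smul_apply,
      ContinuousLinearMap.comp_apply]
  have hTe : T e = w := by rw [hTapp, hwdef, hgdef]
  have hquad : ∀ v : F, ⟪T v, v⟫ = ‖v‖ ^ 2 - η * ‖adjoint J v‖ ^ 2 := by
    intro v
    rw [hTapp, inner_sub_left, real_inner_smul_left, hipJg v v,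
      real_inner_self_eq_norm_sq, real_inner_self_eq_norm_sq]
  have hsym : ∀ u v : F, ⟪T u, v⟫ = ⟪u, T v⟫ := by
    intro u v
    rw [hTapp, hTapp, inner_sub_left, inner_sub_right, real_inner_smul_left,
      real_inner_smul_right, hipJg u v]
    congr 2
    rw [real_inner_comm, ← ContinuousLinearMap.adjoint_inner_left J, real_inner_comm]
  have hadjβ : ∀ v : F, ‖adjoint J v‖ ≤ β * ‖v‖ := by
    intro v
    have h2b : ‖adjoint J v‖ ≤ ‖adjoint J‖ * ‖v‖ := ContinuousLinearMap.le_opNorm _ _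
    have h2c : ‖adjoint J‖ = ‖J‖ := LinearIsometryEquiv.norm_map adjoint J
    rw [h2c] at h2b
    exact le_trans h2b (mul_le_mul_of_nonneg_right (h3 θ) (norm_nonneg v))
  have hpos : ∀ v : F, 0 ≤ ⟪T v, v⟫ := by
    intro v
    rw [hquad]
    have q2 : ‖adjoint J v‖ ^ 2 ≤ (β * ‖v‖) ^ 2 :=
      pow_le_pow_left₀ (norm_nonneg _) (hadjβ v) 2
    nlinarith only [mul_le_mul_of_nonneg_left q2 hη0.le,
      mul_le_mul_of_nonneg_right hηβ (sq_nonneg ‖v‖)]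
  have hle : ∀ v : F, ⟪T v, v⟫ ≤ (1 - 25 * η * α ^ 2 / 9) * ‖v‖ ^ 2 := by
    intro v
    rw [hquad]
    have q2 : (5 * α / 3 * ‖v‖) ^ 2 ≤ ‖adjoint J v‖ ^ 2 :=
      pow_le_pow_left₀ (by positivity) (hlow v) 2
    nlinarith only [mul_le_mul_of_nonneg_left q2 hη0.le]
  have hwspec : ‖w‖ ≤ (1 - 25 * η * α ^ 2 / 9) * r := by
    rw [← hTe, hrdef]
    exact aux_opbound T _ hsym hpos hle e
  have hkey : ‖e'‖ + α / 5 * (η * s) ≤ r :=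
    aux_key α η r s ‖w‖ ‖e'‖ hα hη0 hr (norm_nonneg g) hr' (norm_nonneg w) hwspec hw2
  constructor
  · rw [hyfθ']
    have hsplit : θ' - θ₀ = (θ - θ₀) + (θ' - θ) := by abel
    have hN' : Nst (θ' - θ₀) ≤ Nst (θ - θ₀) + η * s := by
      rw [hsplit]
      refine le_trans (map_add_le_add _ _ _) ?_
      have hd : Nst (θ' - θ) ≤ η * s := by
        refine le_trans (hNdom _) ?_
        rw [hΔeq, norm_neg, norm_smul, Real.norm_eq_abs, abs_of_pos hη0]
      linarith
    have hmul : α / 5 * Nst (θ' - θ₀) ≤ α / 5 * (Nst (θ - θ₀) + η * s) :=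
      mul_le_mul_of_nonneg_left hN' (by positivity)
    linarith only [hkey, hb, hmul]
  · rw [hyfθ']
    have hmul := mul_le_mul_of_nonneg_left hslow
      (mul_nonneg (by positivity : (0:ℝ) ≤ α / 5) hη0.le)
    have p0 : (0:ℝ) ≤ η * α ^ 2 * r := by positivity
    nlinarith only [hkey, hmul, p0]

/-- non-smooth overparameterized optimization: let `f : ℝ^p → ℝ^n` be
differentiable with Jacobian `J(θ) = fderiv ℝ f θ`, let `‖·‖_*` (here `Nst`, a norm on
`ℝ^p`) be dominated by the Euclidean norm. Suppose `σ_min(J(θ₀)) ≥ 2α` (where `σ_min` is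
the infimum of `‖J(θ₀)ᵀ u‖` over unit vectors `u`), `‖J(θ) − J(θ₀)‖ ≤ α/3` whenever
`‖θ − θ₀‖_* ≤ R := 5‖y − f(θ₀)‖/α`, and `‖J(θ)‖ ≤ β` for all `θ`. Then for any step size
`0 < η ≤ 1/β²`, the iterations `θ_{τ+1} = θ_τ − η·J(θ_τ)ᵀ(f(θ_τ) − y)` satisfy
`‖y − f(θ_τ)‖ ≤ (1 − ηα²/4)^τ ‖y − f(θ₀)‖` and
`(α/5)‖θ_τ − θ₀‖_* + ‖y − f(θ_τ)‖ ≤ ‖y − f(θ₀)‖` for all `τ`. -/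
theorem overparam_gradient_descent_convergence {p n : ℕ}
    (f : EuclideanSpace ℝ (Fin p) → EuclideanSpace ℝ (Fin n))
    (hf : Differentiable ℝ f)
    (y : EuclideanSpace ℝ (Fin n)) (θ₀ : EuclideanSpace ℝ (Fin p))
    (Nst : Seminorm ℝ (EuclideanSpace ℝ (Fin p)))
    (hNdef : ∀ x, Nst x = 0 → x = 0)
    (hNdom : ∀ x, Nst x ≤ ‖x‖)
    (α β : ℝ) (hα : 0 < α) (hβ : 0 < β)
    (h1 : 2 * α ≤ ⨅ u : {u : EuclideanSpace ℝ (Fin n) // ‖u‖ = 1},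
        ‖ContinuousLinearMap.adjoint (fderiv ℝ f θ₀) (u : EuclideanSpace ℝ (Fin n))‖)
    (h2 : ∀ θ, Nst (θ - θ₀) ≤ 5 * ‖y - f θ₀‖ / α →
        ‖fderiv ℝ f θ - fderiv ℝ f θ₀‖ ≤ α / 3)
    (h3 : ∀ θ, ‖fderiv ℝ f θ‖ ≤ β)
    (η : ℝ) (hη0 : 0 < η) (hη : η ≤ 1 / β ^ 2)
    (θseq : ℕ → EuclideanSpace ℝ (Fin p))
    (hθ0 : θseq 0 = θ₀)
    (hstep : ∀ τ : ℕ, θseq (τ + 1) = θseq τ -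
        η • ContinuousLinearMap.adjoint (fderiv ℝ f (θseq τ)) (f (θseq τ) - y)) :
    ∀ τ : ℕ,
      ‖y - f (θseq τ)‖ ≤ (1 - η * α ^ 2 / 4) ^ τ * ‖y - f θ₀‖ ∧
      α / 5 * Nst (θseq τ - θ₀) + ‖y - f (θseq τ)‖ ≤ ‖y - f θ₀‖ := by
  classical
  have hηβ : η * β ^ 2 ≤ 1 := by
    have := (le_div_iff₀ (by positivity : (0:ℝ) < β ^ 2)).mp hη
    linarith
  have hbdd : BddBelow (Set.range fun u : {u : EuclideanSpace ℝ (Fin n) // ‖u‖ = 1} =>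
      ‖ContinuousLinearMap.adjoint (fderiv ℝ f θ₀) (u : EuclideanSpace ℝ (Fin n))‖) := by
    refine ⟨0, ?_⟩
    rintro x ⟨u, rfl⟩
    positivity
  have hn : 0 < n := by
    by_contra hn
    push_neg at hn
    have hn0 : n = 0 := Nat.le_zero.mp hn
    haveI hFe : IsEmpty (Fin n) := ⟨fun i => absurd i.2 (by omega)⟩
    have hempty : IsEmpty {u : EuclideanSpace ℝ (Fin n) // ‖u‖ = 1} := by
      refine ⟨fun u => ?_⟩
      have hu2 := u.2
      rw [EuclideanSpace.norm_eq, Finset.univ_eq_empty (α := Fin n), Finset.sum_empty,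
        Real.sqrt_zero] at hu2
      exact one_ne_zero hu2.symm
    rw [@Real.iInf_of_isEmpty _ hempty] at h1
    linarith
  have hβα : 2 * α ≤ β := by
    set u : EuclideanSpace ℝ (Fin n) := EuclideanSpace.single (⟨0, hn⟩ : Fin n) (1:ℝ) with hu
    have hunorm : ‖u‖ = 1 := by rw [hu, EuclideanSpace.norm_single]; norm_num
    have hle := ciInf_le hbdd (⟨u, hunorm⟩ : {u : EuclideanSpace ℝ (Fin n) // ‖u‖ = 1})
    have h2a : 2 * α ≤ ‖ContinuousLinearMap.adjoint (fderiv ℝ f θ₀) u‖ := le_trans h1 hle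
    have h2b : ‖ContinuousLinearMap.adjoint (fderiv ℝ f θ₀) u‖
        ≤ ‖ContinuousLinearMap.adjoint (fderiv ℝ f θ₀)‖ * ‖u‖ :=
      ContinuousLinearMap.le_opNorm _ _
    have h2c : ‖ContinuousLinearMap.adjoint (fderiv ℝ f θ₀)‖ = ‖fderiv ℝ f θ₀‖ :=
      LinearIsometryEquiv.norm_map ContinuousLinearMap.adjoint (fderiv ℝ f θ₀)
    rw [hunorm, mul_one, h2c] at h2b
    exact le_trans h2a (le_trans h2b (h3 θ₀))
  have hρ : 0 ≤ 1 - η * α ^ 2 / 4 := by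
    have q1 : 4 * α ^ 2 ≤ β ^ 2 := by nlinarith only [hβα, hα.le]
    have q2 : η * (4 * α ^ 2) ≤ η * β ^ 2 := mul_le_mul_of_nonneg_left q1 hη0.le
    linarith only [q2, hηβ]
  have hlow0 : ∀ v : EuclideanSpace ℝ (Fin n),
      2 * α * ‖v‖ ≤ ‖ContinuousLinearMap.adjoint (fderiv ℝ f θ₀) v‖ := by
    intro v
    rcases eq_or_ne v 0 with rfl | hv
    · simp
    have hvpos : (0:ℝ) < ‖v‖ := norm_pos_iff.mpr hv
    set u : EuclideanSpace ℝ (Fin n) := ‖v‖⁻¹ • v with hu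
    have hunorm : ‖u‖ = 1 := by
      rw [hu, norm_smul, norm_inv, norm_norm, inv_mul_cancel₀ hvpos.ne']
    have hle := ciInf_le hbdd (⟨u, hunorm⟩ : {u : EuclideanSpace ℝ (Fin n) // ‖u‖ = 1})
    have h2a : 2 * α ≤ ‖ContinuousLinearMap.adjoint (fderiv ℝ f θ₀) u‖ := le_trans h1 hle
    rw [hu, _root_.map_smul, norm_smul, norm_inv, norm_norm] at h2a
    rw [← mul_le_mul_iff_of_pos_left hvpos] at h2a
    calc 2 * α * ‖v‖ = ‖v‖ * (2 * α) := by ring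
      _ ≤ ‖v‖ * (‖v‖⁻¹ * ‖ContinuousLinearMap.adjoint (fderiv ℝ f θ₀) v‖) := h2a
      _ = ‖ContinuousLinearMap.adjoint (fderiv ℝ f θ₀) v‖ := by field_simp
  intro τ
  induction τ with
  | zero =>
      constructor
      · simp [hθ0]
      · simp [hθ0]
  | succ τ ih =>
      obtain ⟨ha, hb⟩ := ih
      have hstep' := aux_step f hf y θ₀ Nst hNdom α β η hα hβ hη0 hηβ hβα hlow0 h2 h3
        (θseq τ) (θseq (τ + 1)) (hstep τ) hb
      refine ⟨?_, hstep'.1⟩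
      calc ‖y - f (θseq (τ + 1))‖ ≤ (1 - η * α ^ 2 / 4) * ‖y - f (θseq τ)‖ := hstep'.2
        _ ≤ (1 - η * α ^ 2 / 4) * ((1 - η * α ^ 2 / 4) ^ τ * ‖y - f θ₀‖) :=
            mul_le_mul_of_nonneg_left ha hρ
        _ = (1 - η * α ^ 2 / 4) ^ (τ + 1) * ‖y - f θ₀‖ := by ring
end
end

section
/- Let z ∈ ℝ^k be nonzero and let W₀, W ∈ ℝ^{d×k}. Define S(W) = {ℓ ∈ {1,…,d} : sign((Wz)_ℓ) ≠ sign((W₀z)_ℓ)}. For any positive integer m, if ‖W − W₀‖ ≤ √m·|W₀z|_{m−}/‖z‖ (spectral norm), then |S(W)| ≤ 2m. -/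
open MeasureTheory ProbabilityTheory Matrix

noncomputable section

/-- Euclidean norm of a vector. -/
def evnorm {ι : Type*} [Fintype ι] (x : ι → ℝ) : ℝ := Real.sqrt (∑ i, x i ^ 2)

/-- Spectral (ℓ2 operator) norm of a matrix. -/
def specNorm {m n : Type*} [Fintype m] [Fintype n] (A : Matrix m n ℝ) : ℝ :=
  ⨆ x : {x : n → ℝ // evnorm x ≤ 1}, evnorm (A.mulVec x)

/-- `|v|_{m−}`: the `m`-th smallest entry (1-indexed) of `v` after sorting the entries by
absolute value. -/
def kthSmallestAbs {d : ℕ} (v : Fin d → ℝ) (m : ℕ) : ℝ :=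
  ((Finset.univ.val.map fun ℓ => |v ℓ|).sort (· ≤ ·)).getD (m - 1) 0

/-- The set `S(W) = {ℓ : sign((Wz)_ℓ) ≠ sign((W₀z)_ℓ)}` of sign changes. -/
def signChanges {d k : ℕ} (z : Fin k → ℝ) (W₀ W : Matrix (Fin d) (Fin k) ℝ) :
    Finset (Fin d) :=
  Finset.univ.filter fun ℓ => Real.sign (W.mulVec z ℓ) ≠ Real.sign (W₀.mulVec z ℓ)

lemma evnorm_nonneg' {ι : Type*} [Fintype ι] (x : ι → ℝ) : 0 ≤ evnorm x :=
  Real.sqrt_nonneg _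

lemma evnorm_sq' {ι : Type*} [Fintype ι] (x : ι → ℝ) : evnorm x ^ 2 = ∑ i, x i ^ 2 :=
  Real.sq_sqrt (Finset.sum_nonneg fun i _ => sq_nonneg _)

lemma evnorm_smul' {ι : Type*} [Fintype ι] (c : ℝ) (x : ι → ℝ) :
    evnorm (c • x) = |c| * evnorm x := by
  unfold evnorm
  have h : ∑ i, (c • x) i ^ 2 = c ^ 2 * ∑ i, x i ^ 2 := by
    rw [Finset.mul_sum]
    refine Finset.sum_congr rfl fun i _ => ?_
    simp [mul_pow]
  rw [h, Real.sqrt_mul (sq_nonneg c), Real.sqrt_sq_eq_abs]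

lemma evnorm_pos' {ι : Type*} [Fintype ι] {x : ι → ℝ} (hx : x ≠ 0) : 0 < evnorm x := by
  obtain ⟨i, hi⟩ := Function.ne_iff.1 hx
  have hi' : x i ≠ 0 := by simpa using hi
  refine Real.sqrt_pos.2 ?_
  refine Finset.sum_pos' (fun j _ => sq_nonneg _) ⟨i, Finset.mem_univ i, ?_⟩
  have := abs_pos.2 hi'
  nlinarith [sq_abs (x i)]

lemma specNorm_bdd {m n : Type*} [Fintype m] [Fintype n] (A : Matrix m n ℝ)
    (x : {x : n → ℝ // evnorm x ≤ 1}) :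
    evnorm (A.mulVec x) ≤ Real.sqrt (∑ l, ∑ i, A l i ^ 2) := by
  obtain ⟨x, hx⟩ := x
  unfold evnorm at *
  refine Real.sqrt_le_sqrt ?_
  have h0 : (0:ℝ) ≤ ∑ i, x i ^ 2 := Finset.sum_nonneg fun i _ => sq_nonneg _
  have hx1 : ∑ i, x i ^ 2 ≤ 1 := by
    nlinarith [Real.sq_sqrt h0, Real.sqrt_nonneg (∑ i, x i ^ 2)]
  calc ∑ l, A.mulVec x l ^ 2
      ≤ ∑ l, ((∑ i, A l i ^ 2) * ∑ i, x i ^ 2) := by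
        refine Finset.sum_le_sum fun l _ => ?_
        have : A.mulVec x l = ∑ i, A l i * x i := by
          simp [Matrix.mulVec, dotProduct]
        rw [this]
        exact Finset.sum_mul_sq_le_sq_mul_sq _ _ _
    _ ≤ ∑ l, ∑ i, A l i ^ 2 := by
        refine Finset.sum_le_sum fun l _ => ?_
        have h1 : (0:ℝ) ≤ ∑ i, A l i ^ 2 := Finset.sum_nonneg fun i _ => sq_nonneg _
        nlinarith

lemma le_specNorm' {m n : Type*} [Fintype m] [Fintype n] (A : Matrix m n ℝ) (x : n → ℝ) :
    evnorm (A.mulVec x) ≤ specNorm A * evnorm x := by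
  by_cases hx : x = 0
  · simp [hx, evnorm, Matrix.mulVec_zero]
  · have hpos := evnorm_pos' hx
    have hbdd : BddAbove
        (Set.range fun x : {x : n → ℝ // evnorm x ≤ 1} => evnorm (A.mulVec ↑x)) := by
      refine ⟨Real.sqrt (∑ l, ∑ i, A l i ^ 2), ?_⟩
      rintro _ ⟨y, rfl⟩
      exact specNorm_bdd A y
    set c := (evnorm x)⁻¹ with hc
    have hcpos : 0 < c := inv_pos.2 hpos
    have hy : evnorm (c • x) = 1 := by
      rw [evnorm_smul', abs_of_pos hcpos, hc]
      field_simp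
    have hle : evnorm (A.mulVec (c • x)) ≤ specNorm A :=
      le_ciSup hbdd ⟨c • x, le_of_eq hy⟩
    rw [Matrix.mulVec_smul, evnorm_smul', abs_of_pos hcpos] at hle
    calc evnorm (A.mulVec x) = (c * evnorm (A.mulVec x)) * evnorm x := by
          rw [hc]; field_simp
      _ ≤ specNorm A * evnorm x := mul_le_mul_of_nonneg_right hle hpos.le

lemma sign_ne_lemma {u v : ℝ} (h : Real.sign u ≠ Real.sign v) :
    |v| ≤ |u - v| ∧ u - v ≠ 0 := by
  constructor
  · rcases lt_trichotomy v 0 with hv | hv | hv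
    · have h1 : Real.sign v = -1 := Real.sign_of_neg hv
      have h2 : 0 ≤ u := by
        by_contra h3
        push_neg at h3
        exact h (by rw [Real.sign_of_neg h3, h1])
      rw [abs_of_neg hv, abs_of_nonneg (by linarith)]
      linarith
    · simp [hv]
    · have h1 : Real.sign v = 1 := Real.sign_of_pos hv
      have h2 : u ≤ 0 := by
        by_contra h3
        push_neg at h3
        exact h (by rw [Real.sign_of_pos h3, h1])
      rw [abs_of_pos hv, abs_of_nonpos (by linarith)]
      linarith
  · intro he
    exact h (by rw [sub_eq_zero.1 he])

lemma count_lt_kth {d : ℕ} (v : Fin d → ℝ) (m : ℕ) (hm : 0 < m) (hmd : m ≤ d) :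
    (Finset.univ.filter fun ℓ => |v ℓ| < kthSmallestAbs v m).card ≤ m - 1 ∧
      0 ≤ kthSmallestAbs v m := by
  classical
  set M := (Finset.univ.val.map fun ℓ : Fin d => |v ℓ|) with hM
  set L := M.sort (· ≤ ·) with hL
  have hlen : L.length = d := by
    rw [hL, Multiset.length_sort, hM]
    simp
  have hidx : m - 1 < L.length := by omega
  have ht : kthSmallestAbs v m = L[m-1] := by
    rw [kthSmallestAbs, ← hM, ← hL]
    exact List.getD_eq_getElem L 0 hidx
  have hsorted : L.Pairwise (· ≤ ·) := Multiset.pairwise_sort _ _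
  constructor
  · set t := kthSmallestAbs v m with htd
    -- card of filter = countP of the list
    have h1 : (Finset.univ.filter fun ℓ => |v ℓ| < t).card
        = Multiset.countP (fun a => a < t) M := by
      rw [hM, Multiset.countP_map]
      rw [Finset.card_def, Finset.filter_val]
    have h2 : Multiset.countP (fun a => a < t) M
        = L.countP (fun a => decide (a < t)) := by
      rw [← Multiset.sort_eq M (· ≤ ·), ← hL, Multiset.coe_countP]
    have h3 : L.countP (fun a => decide (a < t)) ≤ m - 1 := by
      have hsplit := List.take_append_drop (m - 1) L
      have h4 : L.countP (fun a => decide (a < t))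
          = (L.take (m - 1)).countP (fun a => decide (a < t))
            + (L.drop (m - 1)).countP (fun a => decide (a < t)) := by
        conv_lhs => rw [← hsplit]
        rw [List.countP_append]
      have h5 : (L.drop (m - 1)).countP (fun a => decide (a < t)) = 0 := by
        refine List.countP_eq_zero.2 fun a ha => ?_
        simp only [decide_eq_true_eq, not_lt]
        obtain ⟨j, hj, hja⟩ := List.mem_iff_getElem.1 ha
        have hj' : m - 1 + j < L.length := by
          rw [List.length_drop] at hj; omega
        have hja' : a = L.get ⟨m - 1 + j, hj'⟩ := by
          rw [← hja, List.getElem_drop, List.get_eq_getElem]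
        have hmono := hsorted.rel_get_of_le (a := ⟨m - 1, hidx⟩)
          (b := ⟨m - 1 + j, hj'⟩) (by simp)
        rw [hja', ht]
        simpa [List.get_eq_getElem] using hmono
      have h6 : (L.take (m - 1)).countP (fun a => decide (a < t))
          ≤ (L.take (m - 1)).length := List.countP_le_length
      have h7 : (L.take (m - 1)).length = m - 1 := by
        rw [List.length_take]; omega
      omega
    omega
  · have hmem : L[m-1] ∈ L := List.getElem_mem hidx
    rw [← Multiset.mem_coe, Multiset.sort_eq] at hmem
    obtain ⟨ℓ, -, hℓ⟩ := Multiset.mem_map.1 hmem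
    rw [ht, ← hℓ]
    exact abs_nonneg _

/-- if `‖W − W₀‖ ≤ √m·|W₀z|_{m−}/‖z‖` (spectral norm), then `|S(W)| ≤ 2m`. -/
theorem sign_changes_card_le {d k : ℕ} (z : Fin k → ℝ) (hz : z ≠ 0)
    (W₀ W : Matrix (Fin d) (Fin k) ℝ) (m : ℕ) (hm : 0 < m) (hmd : m ≤ d)
    (h : specNorm (W - W₀) ≤ Real.sqrt m * kthSmallestAbs (W₀.mulVec z) m / evnorm z) :
    (signChanges z W₀ W).card ≤ 2 * m := by
  classical
  by_contra hcon
  push_neg at hcon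
  set v := W₀.mulVec z with hv
  set u := W.mulVec z with hu
  obtain ⟨hcount, ht0⟩ := count_lt_kth v m hm hmd
  set t := kthSmallestAbs v m with htdef
  set S := signChanges z W₀ W with hSdef
  have hsign : ∀ ℓ ∈ S, |v ℓ| ≤ |u ℓ - v ℓ| ∧ u ℓ - v ℓ ≠ 0 := by
    intro ℓ hℓ
    exact sign_ne_lemma (Finset.mem_filter.1 hℓ).2
  have hz' : 0 < evnorm z := evnorm_pos' hz
  have hδ : evnorm ((W - W₀).mulVec z) ≤ Real.sqrt m * t := by
    calc evnorm ((W - W₀).mulVec z) ≤ specNorm (W - W₀) * evnorm z := le_specNorm' _ _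
      _ ≤ (Real.sqrt m * t / evnorm z) * evnorm z :=
          mul_le_mul_of_nonneg_right h hz'.le
      _ = Real.sqrt m * t := by field_simp
  have hδ2 : ∑ ℓ, (u ℓ - v ℓ) ^ 2 ≤ (m : ℝ) * t ^ 2 := by
    have h1 : (W - W₀).mulVec z = fun ℓ => u ℓ - v ℓ := by
      rw [Matrix.sub_mulVec]; rfl
    have h3 : evnorm ((W - W₀).mulVec z) ^ 2 ≤ (Real.sqrt m * t) ^ 2 :=
      pow_le_pow_left₀ (evnorm_nonneg' _) hδ 2
    rw [evnorm_sq', h1] at h3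
    have h4 : (Real.sqrt m * t) ^ 2 = (m : ℝ) * t ^ 2 := by
      rw [mul_pow, Real.sq_sqrt (by positivity : (0:ℝ) ≤ (m:ℝ))]
    rw [h4] at h3
    exact h3
  set S' := S.filter (fun ℓ => t ≤ |v ℓ|) with hS'
  have hcard : m + 2 ≤ S'.card := by
    have h1 := Finset.card_filter_add_card_filter_not
      (s := S) (p := fun ℓ => t ≤ |v ℓ|)
    rw [← hS'] at h1
    have h2 : (S.filter fun ℓ => ¬ t ≤ |v ℓ|).card
        ≤ (Finset.univ.filter fun ℓ => |v ℓ| < t).card := by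
      refine Finset.card_le_card fun ℓ hℓ => ?_
      have := Finset.mem_filter.1 hℓ
      exact Finset.mem_filter.2 ⟨Finset.mem_univ _, lt_of_not_ge this.2⟩
    omega
  have hsum : (S'.card : ℝ) * t ^ 2 ≤ (m : ℝ) * t ^ 2 := by
    calc (S'.card : ℝ) * t ^ 2 = ∑ _ℓ ∈ S', t ^ 2 := by
          rw [Finset.sum_const, nsmul_eq_mul]
      _ ≤ ∑ ℓ ∈ S', (u ℓ - v ℓ) ^ 2 := by
          refine Finset.sum_le_sum fun ℓ hℓ => ?_
          have hm1 := (Finset.mem_filter.1 hℓ).2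
          have hm2 := (hsign ℓ (Finset.mem_filter.1 hℓ).1).1
          nlinarith [sq_abs (u ℓ - v ℓ), sq_abs (v ℓ), abs_nonneg (v ℓ),
            abs_nonneg (u ℓ - v ℓ)]
      _ ≤ ∑ ℓ, (u ℓ - v ℓ) ^ 2 :=
          Finset.sum_le_sum_of_subset_of_nonneg (Finset.subset_univ _)
            (fun ℓ _ _ => sq_nonneg _)
      _ ≤ (m : ℝ) * t ^ 2 := hδ2
  have htz : t = 0 := by
    have hcR : (m : ℝ) + 2 ≤ (S'.card : ℝ) := by exact_mod_cast hcard
    have ht2 : t ^ 2 ≤ 0 := by nlinarith [sq_nonneg t]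
    have : t ^ 2 = 0 := le_antisymm ht2 (sq_nonneg t)
    exact pow_eq_zero_iff (by norm_num) |>.1 this
  have hall : ∀ ℓ, u ℓ - v ℓ = 0 := by
    intro ℓ
    rw [htz] at hδ2
    have h0 : ∑ ℓ, (u ℓ - v ℓ) ^ 2 ≤ 0 := by simpa using hδ2
    have hnn := Finset.sum_nonneg (fun ℓ (_ : ℓ ∈ Finset.univ) => sq_nonneg (u ℓ - v ℓ))
    have heq : ∑ ℓ, (u ℓ - v ℓ) ^ 2 = 0 := le_antisymm h0 hnn
    have := (Finset.sum_eq_zero_iff_of_nonneg (fun ℓ _ => sq_nonneg _)).1 heq ℓ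
      (Finset.mem_univ ℓ)
    exact pow_eq_zero_iff (by norm_num) |>.1 this
  obtain ⟨ℓ, hℓ⟩ := Finset.card_pos.1 (by omega : 0 < S.card)
  exact (hsign ℓ hℓ).2 (hall ℓ)
end
end

section
/- Let z ∈ ℝ^k be a fixed nonzero vector and let W₀ ∈ ℝ^{d×k} be a random matrix with i.i.d. N(0,1) entries. Then for any positive integer m ≤ d, with probability at least 1 − e^{−m/6}, it holds that |W₀z|_{m−}/‖z‖ ≥ m/(2d). -/
open MeasureTheory ProbabilityTheory Matrix

noncomputable section

instance matMeasurableSpace {m n : ℕ} : MeasurableSpace (Matrix (Fin m) (Fin n) ℝ) :=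
  inferInstanceAs (MeasurableSpace (Fin m → Fin n → ℝ))

/-- Law of a random `m × n` matrix with i.i.d. `N(0, v)` entries (variance `v`). -/
def matrixGaussian (m n : ℕ) (v : NNReal) : Measure (Matrix (Fin m) (Fin n) ℝ) :=
  Measure.pi fun _ : Fin m => Measure.pi fun _ : Fin n => gaussianReal 0 v

open Real NNReal ENNReal

section Aux

lemma pdf_conv_key (a b : ℝ) (ha : 0 < a) (hb : 0 < b) (u : ℝ) (x : ℝ) :
    (Real.sqrt (2*π*a))⁻¹ * Real.exp (-(x-0)^2/(2*a)) *
      ((Real.sqrt (2*π*b))⁻¹ * Real.exp (-(u-x)^2/(2*b)))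
    = ((Real.sqrt (2*π*(a+b)))⁻¹ * Real.exp (-(u-0)^2/(2*(a+b)))) *
        ((Real.sqrt (π/((a+b)/(2*a*b))))⁻¹ *
          Real.exp (-((a+b)/(2*a*b)) * (x - a*u/(a+b))^2)) := by
  have hπ := Real.pi_pos
  have hab : 0 < a + b := by linarith
  have ha' : a ≠ 0 := ha.ne'
  have hb' : b ≠ 0 := hb.ne'
  have hab' : a + b ≠ 0 := hab.ne'
  have hconst : (Real.sqrt (2*π*a) * Real.sqrt (2*π*b))⁻¹
      = (Real.sqrt (2*π*(a+b)) * Real.sqrt (π/((a+b)/(2*a*b))))⁻¹ := by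
    rw [← Real.sqrt_mul (by positivity), ← Real.sqrt_mul (by positivity)]
    congr 1
    field_simp
  have hexp : -(x-0)^2/(2*a) + -(u-x)^2/(2*b)
      = -(u-0)^2/(2*(a+b)) + -((a+b)/(2*a*b)) * (x - a*u/(a+b))^2 := by
    field_simp
    ring
  rw [mul_mul_mul_comm, ← Real.exp_add, mul_mul_mul_comm, ← Real.exp_add,
    ← mul_inv, ← mul_inv, hconst, hexp]

lemma pdf_conv (a b : ℝ) (ha : 0 < a) (hb : 0 < b) (u : ℝ) :
    ∫ x : ℝ, (Real.sqrt (2*π*a))⁻¹ * Real.exp (-(x-0)^2/(2*a)) *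
      ((Real.sqrt (2*π*b))⁻¹ * Real.exp (-(u-x)^2/(2*b)))
    = (Real.sqrt (2*π*(a+b)))⁻¹ * Real.exp (-(u-0)^2/(2*(a+b))) := by
  have hπ := Real.pi_pos
  have hab : 0 < a + b := by linarith
  have hcpos : 0 < (a+b)/(2*a*b) := by positivity
  simp only [pdf_conv_key a b ha hb u]
  rw [MeasureTheory.integral_const_mul, MeasureTheory.integral_const_mul,
    MeasureTheory.integral_sub_right_eq_self
      (fun x => Real.exp (-((a+b)/(2*a*b)) * x^2)) (a*u/(a+b)),
    integral_gaussian, inv_mul_cancel₀ (by positivity)]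
  ring

lemma pdf_conv_integrable (a b : ℝ) (ha : 0 < a) (hb : 0 < b) (u : ℝ) :
    Integrable (fun x : ℝ => (Real.sqrt (2*π*a))⁻¹ * Real.exp (-(x-0)^2/(2*a)) *
      ((Real.sqrt (2*π*b))⁻¹ * Real.exp (-(u-x)^2/(2*b)))) := by
  have hπ := Real.pi_pos
  have hab : 0 < a + b := by linarith
  have hcpos : 0 < (a+b)/(2*a*b) := by positivity
  simp only [pdf_conv_key a b ha hb u]
  apply Integrable.const_mul
  apply Integrable.const_mul
  exact (integrable_exp_neg_mul_sq hcpos).comp_sub_right _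

lemma gaussian_conv (a b : ℝ≥0) :
    ((gaussianReal 0 a).prod (gaussianReal 0 b)).map (fun p : ℝ × ℝ => p.1 + p.2)
      = gaussianReal 0 (a + b) := by
  rcases eq_or_ne a 0 with rfl | ha
  · rw [gaussianReal_zero_var, Measure.dirac_prod, Measure.map_map (by fun_prop) (by fun_prop)]
    simp only [Function.comp_def, zero_add]
    simp [Measure.map_id]
  rcases eq_or_ne b 0 with rfl | hb
  · rw [gaussianReal_zero_var, Measure.prod_dirac, Measure.map_map (by fun_prop) (by fun_prop)]
    simp only [Function.comp_def, add_zero]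
    simp [Measure.map_id]
  have hab : a + b ≠ 0 := fun h => ha (add_eq_zero.mp h).1
  have ha' : (0:ℝ) < a := by exact_mod_cast pos_iff_ne_zero.mpr ha
  have hb' : (0:ℝ) < b := by exact_mod_cast pos_iff_ne_zero.mpr hb
  ext s hs
  rw [Measure.map_apply (by fun_prop) hs,
    Measure.prod_apply (hs.preimage (by fun_prop))]
  have h2 : ∀ x : ℝ, gaussianReal 0 b (Prod.mk x ⁻¹' ((fun p : ℝ × ℝ => p.1 + p.2) ⁻¹' s))
      = ∫⁻ u in s, gaussianPDF x b u := by
    intro x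
    have : (Prod.mk x ⁻¹' ((fun p : ℝ × ℝ => p.1 + p.2) ⁻¹' s)) = (fun y => x + y) ⁻¹' s := rfl
    rw [this, ← Measure.map_apply (by fun_prop) hs, gaussianReal_map_const_add, zero_add,
      gaussianReal_apply _ hb]
  simp_rw [h2]
  have hm : Measurable (Function.uncurry fun x u => gaussianPDF 0 a x * gaussianPDF x b u) := by
    refine Measurable.mul (f := fun p : ℝ × ℝ => gaussianPDF 0 a p.1)
      (g := fun p : ℝ × ℝ => gaussianPDF p.1 b p.2) ?_ ?_
    · exact (measurable_gaussianPDF 0 a).comp measurable_fst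
    · unfold gaussianPDF gaussianPDFReal
      fun_prop
  have hm2 : Measurable (Function.uncurry fun x u => gaussianPDF x b u) := by
    unfold gaussianPDF gaussianPDFReal
    fun_prop
  have hg : Measurable fun x => ∫⁻ u in s, gaussianPDF x b u :=
    Measurable.lintegral_prod_right hm2
  rw [gaussianReal_of_var_ne_zero 0 ha,
    lintegral_withDensity_eq_lintegral_mul _ (measurable_gaussianPDF 0 a) hg]
  simp only [Pi.mul_apply]
  have h3 : ∀ x, gaussianPDF 0 a x * ∫⁻ u in s, gaussianPDF x b u
      = ∫⁻ u in s, gaussianPDF 0 a x * gaussianPDF x b u := fun x =>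
    (lintegral_const_mul _ (by unfold gaussianPDF gaussianPDFReal; fun_prop)).symm
  simp_rw [h3]
  rw [lintegral_lintegral_swap (hm.aemeasurable)]
  have h4 : ∀ u, ∫⁻ x, gaussianPDF 0 a x * gaussianPDF x b u = gaussianPDF 0 (a+b) u := by
    intro u
    have hnn : ∀ x : ℝ, 0 ≤ gaussianPDFReal 0 a x * gaussianPDFReal x b u := fun x =>
      mul_nonneg (gaussianPDFReal_nonneg _ _ _) (gaussianPDFReal_nonneg _ _ _)
    simp_rw [gaussianPDF, ← ENNReal.ofReal_mul (gaussianPDFReal_nonneg 0 a _)]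
    rw [← ofReal_integral_eq_lintegral_ofReal ?hint (Filter.Eventually.of_forall hnn)]
    · congr 1
      simp only [gaussianPDFReal_def]
      push_cast
      exact pdf_conv a b ha' hb' u
    case hint =>
      simp only [gaussianPDFReal_def]
      have := pdf_conv_integrable (a:ℝ) b ha' hb' u
      push_cast
      exact this
  simp_rw [h4]
  rw [gaussianReal_apply _ hab]

lemma map_weighted_sum : ∀ (k : ℕ) (z : Fin k → ℝ),
    (Measure.pi fun _ : Fin k => gaussianReal 0 1).map (fun r => ∑ j, r j * z j)
      = gaussianReal 0 ⟨∑ j, (z j)^2, by positivity⟩ := by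
  intro k
  induction k with
  | zero =>
    intro z
    have h0 : (⟨∑ j, (z j)^2, by positivity⟩ : ℝ≥0) = 0 := by
      ext; simp
    rw [h0]; erw [gaussianReal_zero_var]
    have : (fun r : Fin 0 → ℝ => ∑ j, r j * z j) = fun _ => (0:ℝ) := by
      funext r; simp
    rw [this, Measure.map_const]
    simp
  | succ k ih =>
    intro z
    have hp := measurePreserving_piFinSuccAbove (fun _ : Fin (k+1) => gaussianReal 0 1) 0
    set e := MeasurableEquiv.piFinSuccAbove (fun _ : Fin (k+1) => ℝ) 0 with he
    have hmeas : Measurable (fun r : Fin (k+1) → ℝ => ∑ j, r j * z j) := by fun_prop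
    have key : (fun r : Fin (k+1) → ℝ => ∑ j, r j * z j)
        = (fun p : ℝ × (Fin k → ℝ) => p.1 * z 0 + ∑ j, p.2 j * z j.succ) ∘ e := by
      funext r
      simp only [Function.comp_apply, he, MeasurableEquiv.piFinSuccAbove_apply]
      rw [Fin.sum_univ_succ]
      rfl
    rw [key, ← Measure.map_map (by fun_prop) (by fun_prop), hp.map_eq]
    have key2 : (fun p : ℝ × (Fin k → ℝ) => p.1 * z 0 + ∑ j, p.2 j * z j.succ)
        = (fun p : ℝ × ℝ => p.1 + p.2) ∘
          (Prod.map (fun x : ℝ => x * z 0) (fun r : Fin k → ℝ => ∑ j, r j * z j.succ)) := by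
      funext p; rfl
    rw [key2, ← Measure.map_map (by fun_prop) (by fun_prop),
      ← Measure.map_prod_map _ _ (by fun_prop) (by fun_prop),
      gaussianReal_map_mul_const, ih (fun j => z j.succ), mul_zero, mul_one]; erw [gaussian_conv]
    congr 1
    ext
    push_cast
    exact (Fin.sum_univ_succ (fun j => z j ^ 2)).symm

lemma gaussian_small_ball (v : ℝ≥0) (hv : v ≠ 0) (τ : ℝ) (hτ : 0 ≤ τ) :
    gaussianReal 0 v {x : ℝ | |x| < τ} ≤ ENNReal.ofReal (2 * τ / Real.sqrt (2 * π * v)) := by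
  have hπ := Real.pi_pos
  have hv' : (0:ℝ) < v := by exact_mod_cast pos_iff_ne_zero.mpr hv
  have hset : {x : ℝ | |x| < τ} = Set.Ioo (-τ) τ := by
    ext x; simp [abs_lt, Set.mem_Ioo]
  rw [hset, gaussianReal_apply _ hv]
  have hbound : ∀ x ∈ Set.Ioo (-τ) τ,
      gaussianPDF 0 v x ≤ ENNReal.ofReal ((Real.sqrt (2 * π * v))⁻¹) := by
    intro x _
    unfold gaussianPDF
    apply ENNReal.ofReal_le_ofReal
    rw [gaussianPDFReal_def]
    have h1 : Real.exp (-(x - 0)^2 / (2 * v)) ≤ 1 := by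
      rw [Real.exp_le_one_iff]
      exact div_nonpos_of_nonpos_of_nonneg (neg_nonpos.mpr (sq_nonneg _)) (by positivity)
    calc (Real.sqrt (2 * π * v))⁻¹ * Real.exp (-(x - 0)^2/(2 * v))
        ≤ (Real.sqrt (2 * π * v))⁻¹ * 1 := by
          apply mul_le_mul_of_nonneg_left h1 (by positivity)
      _ = (Real.sqrt (2 * π * v))⁻¹ := mul_one _
  calc ∫⁻ x in Set.Ioo (-τ) τ, gaussianPDF 0 v x
      ≤ ∫⁻ _ in Set.Ioo (-τ) τ, ENNReal.ofReal ((Real.sqrt (2 * π * v))⁻¹) :=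
        setLIntegral_mono (by fun_prop) hbound
    _ = ENNReal.ofReal ((Real.sqrt (2 * π * v))⁻¹) * volume (Set.Ioo (-τ) τ) := by
        rw [setLIntegral_const]
    _ ≤ ENNReal.ofReal (2 * τ / Real.sqrt (2 * π * v)) := by
        rw [Real.volume_Ioo, ← ENNReal.ofReal_mul (by positivity)]
        apply ENNReal.ofReal_le_ofReal
        rw [div_eq_mul_inv]
        nlinarith [Real.sqrt_pos.mpr (show (0:ℝ) < 2*π*v by positivity)]

lemma kth_ge {d : ℕ} (v : Fin d → ℝ) (m : ℕ) (hm : 0 < m) (hmd : m ≤ d) (τ : ℝ)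
    [DecidablePred fun i => |v i| < τ]
    (h : (Finset.univ.filter fun i => |v i| < τ).card < m) : τ ≤ kthSmallestAbs v m := by
  set L := ((Finset.univ.val.map fun ℓ : Fin d => |v ℓ|).sort (· ≤ ·)) with hL
  have hlen : L.length = d := by
    rw [hL, Multiset.length_sort, Multiset.card_map]
    simp
  have hsort : L.Pairwise (· ≤ ·) := Multiset.pairwise_sort _ _
  have hidx : m - 1 < L.length := by omega
  have hget : kthSmallestAbs v m = L[m-1] := List.getD_eq_getElem L 0 hidx
  by_contra hcon
  push_neg at hcon
  rw [hget] at hcon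
  have hcount : (Finset.univ.filter fun i => |v i| < τ).card
      = L.countP (fun x => decide (x < τ)) := by
    rw [← Multiset.coe_countP, hL, Multiset.sort_eq, Multiset.countP_map]
    rw [Finset.card_def, Finset.filter_val]
    congr
  have htake : ∀ a ∈ L.take m, (fun x => decide (x < τ)) a = true := by
    intro a ha
    rw [List.mem_take_iff_getElem] at ha
    obtain ⟨i, hi, rfl⟩ := ha
    simp only [decide_eq_true_eq]
    have hi' : i < m := by omega
    have : L[i] ≤ L[m-1] := by
      rcases eq_or_lt_of_le (show i ≤ m - 1 by omega) with heq | hlt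
      · subst heq; exact le_refl _
      · exact List.pairwise_iff_get.mp hsort ⟨i, by omega⟩ ⟨m-1, by omega⟩ hlt
    linarith
  have : m ≤ L.countP (fun x => decide (x < τ)) := by
    have h1 : L.countP (fun x => decide (x < τ)) =
        (L.take m).countP (fun x => decide (x < τ))
          + (L.drop m).countP (fun x => decide (x < τ)) := by
      rw [← List.countP_append, List.take_append_drop]
    rw [h1, List.countP_eq_length.mpr htake, List.length_take]
    omega
  omega

lemma binom_bound {α : Type*} [MeasurableSpace α] (ν : Measure α) [IsProbabilityMeasure ν]
    (C : Set α) (hC : MeasurableSet C) (d m : ℕ) [∀ W : Fin d → α, ∀ i, Decidable (W i ∈ C)]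
    (pr : ℝ) (hpr0 : 0 ≤ pr) (hpr : ν C ≤ ENNReal.ofReal pr) :
    (Measure.pi fun _ : Fin d => ν) {W | m ≤ (Finset.univ.filter fun i => W i ∈ C).card}
      ≤ ENNReal.ofReal ((1/2)^m * (1+pr)^d) := by
  classical
  set p := ν C with hp
  set q := ν Cᶜ with hq
  have hq1 : q = 1 - p := by rw [hq, hp, measure_compl hC (measure_ne_top ν C), measure_univ]
  have hp1 : p ≤ 1 := prob_le_one
  set A : Finset (Fin d) → Set (Fin d → α) :=
    fun S => Set.univ.pi (fun i => if i ∈ S then C else Cᶜ) with hA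
  have hAval : ∀ S : Finset (Fin d), (Measure.pi fun _ : Fin d => ν) (A S)
      = p ^ S.card * q ^ (d - S.card) := by
    intro S
    rw [hA, Measure.pi_pi]
    have : ∀ i : Fin d, ν (if i ∈ S then C else Cᶜ) = if i ∈ S then p else q := by
      intro i; by_cases h : i ∈ S <;> simp [h, hp, hq]
    simp_rw [this]
    rw [Finset.prod_ite, Finset.prod_const, Finset.prod_const]
    congr 1
    · congr 1
      simp [Finset.filter_mem_eq_inter]
    · congr 1
      have hfil : (Finset.filter (fun x => x ∉ S) Finset.univ) = Sᶜ := by ext i; simp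
      rw [hfil, Finset.card_compl, Fintype.card_fin]
  have hsub : {W : Fin d → α | m ≤ (Finset.univ.filter fun i => W i ∈ C).card}
      ⊆ ⋃ S ∈ Finset.univ.filter (fun S : Finset (Fin d) => m ≤ S.card), A S := by
    intro W hW
    simp only [Set.mem_setOf_eq] at hW
    apply Set.mem_biUnion (show (Finset.univ.filter fun i => W i ∈ C)
      ∈ Finset.univ.filter (fun S : Finset (Fin d) => m ≤ S.card) by
        simp only [Finset.mem_filter, Finset.mem_univ, true_and]; exact hW)
    rw [hA]
    intro i _
    by_cases h : W i ∈ C <;> simp [h]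
  calc (Measure.pi fun _ : Fin d => ν) {W | m ≤ (Finset.univ.filter fun i => W i ∈ C).card}
      ≤ (Measure.pi fun _ : Fin d => ν)
          (⋃ S ∈ Finset.univ.filter (fun S : Finset (Fin d) => m ≤ S.card), A S) :=
        measure_mono hsub
    _ ≤ ∑ S ∈ Finset.univ.filter (fun S : Finset (Fin d) => m ≤ S.card),
          (Measure.pi fun _ : Fin d => ν) (A S) := measure_biUnion_finset_le _ _
    _ ≤ ∑ S ∈ Finset.univ.filter (fun S : Finset (Fin d) => m ≤ S.card),
          ((2:ℝ≥0∞)⁻¹)^m * ((2*p) ^ S.card * q ^ (d - S.card)) := by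
        apply Finset.sum_le_sum
        intro S hS
        rw [hAval S]
        have hScard : m ≤ S.card := (Finset.mem_filter.mp hS).2
        have h2 : p ^ S.card = (2:ℝ≥0∞)⁻¹ ^ S.card * (2*p) ^ S.card := by
          rw [← mul_pow, ← mul_assoc, ENNReal.inv_mul_cancel (by norm_num) (by norm_num), one_mul]
        rw [h2]
        have h3 : (2:ℝ≥0∞)⁻¹ ^ S.card ≤ (2:ℝ≥0∞)⁻¹ ^ m :=
          pow_le_pow_of_le_one zero_le (by norm_num) hScard
        calc (2:ℝ≥0∞)⁻¹ ^ S.card * (2*p) ^ S.card * q ^ (d - S.card)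
            ≤ (2:ℝ≥0∞)⁻¹ ^ m * (2*p) ^ S.card * q ^ (d - S.card) := by
              gcongr
          _ = ((2:ℝ≥0∞)⁻¹)^m * ((2*p) ^ S.card * q ^ (d - S.card)) := by ring
    _ ≤ ((2:ℝ≥0∞)⁻¹)^m * ∑ S : Finset (Fin d), ((2*p) ^ S.card * q ^ (d - S.card)) := by
        rw [← Finset.mul_sum]
        gcongr
        exact Finset.filter_subset _ _
    _ = ((2:ℝ≥0∞)⁻¹)^m * (2*p + q)^d := by
        congr 1
        rw [show ((2*p + q)^d : ℝ≥0∞) = ∏ _i : Fin d, (2*p + q) by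
          rw [Finset.prod_const]; simp]
        rw [Finset.prod_add]
        rw [Finset.powerset_univ]
        apply Finset.sum_congr rfl
        intro S _
        rw [Finset.prod_const, Finset.prod_const, Finset.card_univ_diff]
        simp
    _ ≤ ((2:ℝ≥0∞)⁻¹)^m * (1 + p)^d := by
        have h2pq : 2*p + q = 1 + p := by
          rw [hq1, two_mul, add_assoc, add_tsub_cancel_of_le hp1, add_comm]
        rw [h2pq]
    _ ≤ ENNReal.ofReal ((1/2)^m * (1+pr)^d) := by
        rw [ENNReal.ofReal_mul (by positivity), ENNReal.ofReal_pow (by norm_num),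
          ENNReal.ofReal_pow (by positivity)]
        gcongr
        · rw [ENNReal.ofReal_div_of_pos (by norm_num)]
          simp [ENNReal.ofReal_one]
        · rw [ENNReal.ofReal_add (by norm_num) hpr0]
          simp only [ENNReal.ofReal_one]
          gcongr

lemma real_num_bound (m d : ℕ) (hm : 0 < m) (hmd : m ≤ d) :
    (1/2:ℝ)^m * (1 + (m:ℝ)/d * (Real.sqrt (2*π))⁻¹)^d ≤ Real.exp (-(m:ℝ)/6) := by
  have hd : (0:ℝ) < d := by
    have : 0 < d := lt_of_lt_of_le hm hmd
    exact_mod_cast this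
  have hπ := Real.pi_gt_d6
  have hsqrt : (2.5:ℝ) ≤ Real.sqrt (2*π) := by
    have h : (2.5:ℝ) = Real.sqrt 6.25 := by
      rw [show (6.25:ℝ) = 2.5^2 by norm_num, Real.sqrt_sq (by norm_num)]
    rw [h]
    apply Real.sqrt_le_sqrt
    nlinarith
  have hsqrtpos : (0:ℝ) < Real.sqrt (2*π) := by linarith
  set pr : ℝ := (m:ℝ)/d * (Real.sqrt (2*π))⁻¹ with hprdef
  have hpr0 : 0 ≤ pr := by positivity
  have h1 : (1 + pr)^d ≤ Real.exp ((d:ℝ) * pr) := by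
    calc (1 + pr)^d ≤ (Real.exp pr)^d := by
          apply pow_le_pow_left₀ (by linarith)
          rw [add_comm]
          exact Real.add_one_le_exp pr
      _ = Real.exp ((d:ℝ) * pr) := by rw [← Real.exp_nat_mul]
  have h2 : (d:ℝ) * pr = (m:ℝ) * (Real.sqrt (2*π))⁻¹ := by
    rw [hprdef]; field_simp
  have h3 : (1/2:ℝ)^m = Real.exp ((m:ℝ) * (-Real.log 2)) := by
    have he : Real.exp ((m:ℝ) * (-Real.log 2)) = (Real.exp (-Real.log 2))^m := by
      rw [← Real.exp_nat_mul]
    rw [he, Real.exp_neg, Real.exp_log (by norm_num : (0:ℝ) < 2)]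
    norm_num
  calc (1/2:ℝ)^m * (1 + pr)^d
      ≤ Real.exp ((m:ℝ) * (-Real.log 2)) * Real.exp ((m:ℝ) * (Real.sqrt (2*π))⁻¹) := by
        rw [← h3]
        apply mul_le_mul_of_nonneg_left _ (by positivity)
        rw [← h2]; exact h1
    _ = Real.exp ((m:ℝ) * (-Real.log 2) + (m:ℝ) * (Real.sqrt (2*π))⁻¹) := by
        rw [← Real.exp_add]
    _ ≤ Real.exp (-(m:ℝ)/6) := by
        apply Real.exp_le_exp.mpr
        have hlog := Real.log_two_gt_d9
        have hinv : (Real.sqrt (2*π))⁻¹ ≤ 0.4 := by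
          rw [inv_le_comm₀ (by linarith) (by norm_num)]
          linarith
        have hm1 : (1:ℝ) ≤ m := by exact_mod_cast hm
        nlinarith

end Aux

/-- if `W₀ ∈ ℝ^{d×k}` has i.i.d. `N(0,1)` entries, then for any positive
`m ≤ d`, with probability at least `1 − e^{−m/6}`, `|W₀z|_{m−}/‖z‖ ≥ m/(2d)`. -/
theorem kth_smallest_abs_lower_bound {d k : ℕ} (z : Fin k → ℝ) (hz : z ≠ 0)
    (m : ℕ) (hm : 0 < m) (hmd : m ≤ d) :
    ENNReal.ofReal (1 - Real.exp (-(m : ℝ) / 6)) ≤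
      matrixGaussian d k 1
        {W₀ | (m : ℝ) / (2 * d) ≤ kthSmallestAbs (W₀.mulVec z) m / evnorm z} := by
  classical
  have hπ := Real.pi_pos
  have hd0 : 0 < d := lt_of_lt_of_le hm hmd
  have hd0' : (0:ℝ) < d := by exact_mod_cast hd0
  have hm' : (0:ℝ) < m := by exact_mod_cast hm
  -- variance
  have hVpos : (0:ℝ) < ∑ j, (z j)^2 := by
    obtain ⟨j0, hj0⟩ := Function.ne_iff.mp hz
    have h1 : (0:ℝ) < (z j0)^2 :=
      lt_of_le_of_ne (sq_nonneg _) (Ne.symm (pow_ne_zero 2 hj0))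
    exact lt_of_lt_of_le h1
      (Finset.single_le_sum (fun j _ => sq_nonneg (z j)) (Finset.mem_univ j0))
  set V : ℝ≥0 := ⟨∑ j, (z j)^2, by positivity⟩ with hV
  have hVne : V ≠ 0 := by
    intro h
    rw [hV] at h
    have := congrArg (fun x : ℝ≥0 => (x:ℝ)) h
    simp at this
    exact absurd (show (∑ j, (z j)^2 : ℝ) = 0 from this) hVpos.ne'
  have hnorm : evnorm z = Real.sqrt V := rfl
  have hnormpos : 0 < evnorm z := by
    rw [hnorm]
    exact Real.sqrt_pos.mpr hVpos
  set τ : ℝ := (m:ℝ)/(2*d) * evnorm z with hτdef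
  have hτpos : 0 < τ := mul_pos (by positivity) hnormpos
  set ν : Measure (Fin k → ℝ) := Measure.pi fun _ : Fin k => gaussianReal 0 1 with hν
  set C : Set (Fin k → ℝ) := {r | |∑ j, r j * z j| < τ} with hC
  have hCmeas : MeasurableSet C := by
    have : C = (fun r : Fin k → ℝ => |∑ j, r j * z j|) ⁻¹' (Set.Iio τ) := rfl
    rw [this]
    exact measurableSet_Iio.preimage (by fun_prop)
  set pr : ℝ := (m:ℝ)/d * (Real.sqrt (2*π))⁻¹ with hprdef
  have hpr0 : 0 ≤ pr := by positivity
  have hpr : ν C ≤ ENNReal.ofReal pr := by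
    have habs : MeasurableSet {x : ℝ | |x| < τ} :=
      measurableSet_lt continuous_abs.measurable measurable_const
    have hpC : ν C = gaussianReal 0 V {x | |x| < τ} := by
      rw [← map_weighted_sum k z, Measure.map_apply (by fun_prop) habs]
      rfl
    rw [hpC]
    refine le_trans (gaussian_small_ball V hVne τ hτpos.le) ?_
    apply ENNReal.ofReal_le_ofReal
    have hs : Real.sqrt (2*π*V) = Real.sqrt (2*π) * evnorm z := by
      rw [hnorm, ← Real.sqrt_mul (by positivity)]
    have hsq : (0:ℝ) < Real.sqrt (2*π) := Real.sqrt_pos.mpr (by positivity)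
    have heq : 2 * ((m:ℝ)/(2*d) * evnorm z) / (Real.sqrt (2*π) * evnorm z)
        = (m:ℝ)/d * (Real.sqrt (2*π))⁻¹ := by
      field_simp
    rw [hs, hτdef, hprdef, heq]
  -- instance needed
  haveI : IsProbabilityMeasure ν := by
    rw [hν]; infer_instance
  set F : Set (Matrix (Fin d) (Fin k) ℝ) :=
    {W | m ≤ (Finset.univ.filter fun i => W i ∈ C).card} with hF
  have hFmeas : MeasurableSet F := by
    have hFeq : F = ⋃ S ∈ Finset.univ.filter (fun S : Finset (Fin d) => m ≤ S.card),
        ⋂ i ∈ S, (fun W : Matrix (Fin d) (Fin k) ℝ => W i) ⁻¹' C := by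
      ext W
      simp only [hF, Set.mem_setOf_eq, Set.mem_iUnion, Set.mem_iInter, Set.mem_preimage,
        Finset.mem_filter, Finset.mem_univ, true_and]
      constructor
      · intro hW
        exact ⟨Finset.univ.filter fun i => W i ∈ C, hW, fun i hi =>
          (Finset.mem_filter.mp hi).2⟩
      · rintro ⟨S, hScard, hSall⟩
        calc m ≤ S.card := hScard
          _ ≤ (Finset.univ.filter fun i => W i ∈ C).card := by
              apply Finset.card_le_card
              intro i hi
              simp only [Finset.mem_filter, Finset.mem_univ, true_and]
              exact hSall i hi
    rw [hFeq]
    apply Set.Finite.measurableSet_biUnion (Finset.univ.filter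
      (fun S : Finset (Fin d) => m ≤ S.card)).finite_toSet
    intro S _
    apply Set.Finite.measurableSet_biInter S.finite_toSet
    intro i _
    exact hCmeas.preimage (measurable_pi_apply i)
  have hFbound : matrixGaussian d k 1 F ≤ ENNReal.ofReal (Real.exp (-(m:ℝ)/6)) := by
    have hb := binom_bound ν C hCmeas d m pr hpr0 hpr
    refine le_trans ?_ (le_trans hb ?_)
    · exact le_of_eq rfl
    · exact ENNReal.ofReal_le_ofReal (real_num_bound m d hm hmd)
  have hsub : Fᶜ ⊆ {W₀ : Matrix (Fin d) (Fin k) ℝ |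
      (m : ℝ) / (2 * d) ≤ kthSmallestAbs (W₀.mulVec z) m / evnorm z} := by
    intro W hW
    simp only [hF, Set.mem_compl_iff, Set.mem_setOf_eq, not_le] at hW
    have hfil : (Finset.univ.filter fun i => |W.mulVec z i| < τ)
        = (Finset.univ.filter fun i => W i ∈ C) := by
      apply Finset.filter_congr
      intro i _
      rfl
    have hcard : (Finset.univ.filter fun i => |W.mulVec z i| < τ).card < m := by
      rw [hfil]; exact hW
    have hkth := kth_ge (W.mulVec z) m hm hmd τ hcard
    simp only [Set.mem_setOf_eq]
    rw [le_div_iff₀ hnormpos]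
    calc (m:ℝ)/(2*d) * evnorm z = τ := by rw [hτdef]
      _ ≤ kthSmallestAbs (W.mulVec z) m := hkth
  haveI : IsProbabilityMeasure (matrixGaussian d k 1) :=
    inferInstanceAs (IsProbabilityMeasure
      (Measure.pi fun _ : Fin d => Measure.pi fun _ : Fin k => gaussianReal 0 1))
  calc ENNReal.ofReal (1 - Real.exp (-(m : ℝ) / 6))
      ≤ 1 - ENNReal.ofReal (Real.exp (-(m:ℝ)/6)) := by
        rw [ENNReal.ofReal_sub _ (Real.exp_nonneg _)]
        simp [ENNReal.ofReal_one]
    _ ≤ 1 - matrixGaussian d k 1 F := by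
        exact tsub_le_tsub_left hFbound 1
    _ = matrixGaussian d k 1 Fᶜ := by
        rw [measure_compl hFmeas (measure_ne_top _ _), measure_univ]
    _ ≤ matrixGaussian d k 1
          {W₀ | (m : ℝ) / (2 * d) ≤ kthSmallestAbs (W₀.mulVec z) m / evnorm z} :=
        measure_mono hsub
end
end
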